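/- arXiv:0812.2263 — 3 statements merged into one kernel-verified Lean document; each statement's English description precedes it below -/
import Mathlib

section
/- (Maximin characterization of the phase boundary.) For 0 < β < 1 and 0 < r < 1 define δ(q) = 1−β for 0 ≤ q ≤ r and δ(q) = 1−β−(√q−√r)² for q > r, and set γ(q) = δ(q) − max(1−q, δ(q))/2. Then for 1/2 < β < 1 and 0 < r < 1: (i) sup_{q ∈ [0,1]} γ(q) > 0 if and only if r > ρ*(β); and (ii) if r > ρ*(β), then γ(q*(r,β)) = sup_{q ∈ [0,1]} γ(q), i.e. q* = 4r (if r ≤ β/3) or q* = (β+r)²/(4r) (if r > β/3) attains the maximum. -/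
open Filter Set MeasureTheory

noncomputable def gaussPDF (t : ℝ) : ℝ := (Real.sqrt (2 * Real.pi))⁻¹ * Real.exp (-(t ^ 2) / 2)

/-- standard normal CDF Φ -/
noncomputable def normCDF (t : ℝ) : ℝ := ∫ x in Set.Iic t, gaussPDF x

/-- survival function of |N(τ,1)| -/
noncomputable def psiBar (τ t : ℝ) : ℝ := (1 - normCDF (t - τ)) + normCDF (-t - τ)

noncomputable def tprFn (ε τ t : ℝ) : ℝ := ε * psiBar τ t

noncomputable def fprFn (ε t : ℝ) : ℝ := (1 - ε) * psiBar 0 t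

noncomputable def idrFn (ε τ t : ℝ) : ℝ := ε * normCDF (-t - τ)

/-- clipping proxy separation -/
noncomputable def sepFn (ε τ t : ℝ) : ℝ :=
  2 * τ * (tprFn ε τ t - 2 * idrFn ε τ t) / Real.sqrt (tprFn ε τ t + fprFn ε t)

/-- proxy false discovery rate -/
noncomputable def fdrFn (ε τ t : ℝ) : ℝ := fprFn ε t / (tprFn ε τ t + fprFn ε t)

/-- magnitude of derivative of TPR -/
noncomputable def tprD (ε τ t : ℝ) : ℝ := ε * (gaussPDF (t - τ) + gaussPDF (t + τ))

/-- magnitude of derivative of FPR -/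
noncomputable def fprD (ε t : ℝ) : ℝ := 2 * (1 - ε) * gaussPDF t

/-- proxy local false discovery rate -/
noncomputable def lfdrFn (ε τ t : ℝ) : ℝ := fprD ε t / (tprD ε τ t + fprD ε t)

noncomputable def rhoStar (β : ℝ) : ℝ :=
  if β ≤ 1 / 2 then 0 else if β ≤ 3 / 4 then β - 1 / 2 else (1 - Real.sqrt (1 - β)) ^ 2

noncomputable def qStar (r β : ℝ) : ℝ := if r ≤ β / 3 then 4 * r else (β + r) ^ 2 / (4 * r)

/-- sparsity ε_p = p^{-β} in the ARW model -/
noncomputable def epsP (β : ℝ) (p : ℕ) : ℝ := (p : ℝ) ^ (-β)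

/-- strength τ_p = √(2 r log p) in the ARW model -/
noncomputable def tauP (r : ℝ) (p : ℕ) : ℝ := Real.sqrt (2 * r * Real.log p)

/-- threshold t_p(q) = √(2 q log p) -/
noncomputable def tP (q : ℝ) (p : ℕ) : ℝ := Real.sqrt (2 * q * Real.log p)

/-- folded two-point mixture G_{ε,τ} -/
noncomputable def gMix (ε τ t : ℝ) : ℝ :=
  (1 - ε) * (normCDF t - normCDF (-t)) + ε * (normCDF (t - τ) - normCDF (-t - τ))

/-- ideal HC objective -/
noncomputable def hcObj (ε τ t : ℝ) : ℝ :=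
  ((1 - gMix ε τ t) - psiBar 0 t) / Real.sqrt (gMix ε τ t * (1 - gMix ε τ t))

/-- useful feature discovery exponent δ(q) -/
noncomputable def deltaExp (β r q : ℝ) : ℝ :=
  if q ≤ r then 1 - β else 1 - β - (Real.sqrt q - Real.sqrt r) ^ 2

/-- separation growth exponent γ(q) -/
noncomputable def gammaExp (β r q : ℝ) : ℝ :=
  deltaExp β r q - max (1 - q) (deltaExp β r q) / 2

lemma gamma_min' (β r q : ℝ) :
    gammaExp β r q = min (deltaExp β r q - (1 - q) / 2) (deltaExp β r q / 2) := by
  unfold gammaExp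
  rcases le_total (1 - q) (deltaExp β r q) with h | h
  · rw [max_eq_right h, min_eq_right (by linarith)]; ring
  · rw [max_eq_left h, min_eq_left (by linarith)]

lemma delta_high' (β r q : ℝ) (h : r < q) :
    deltaExp β r q = 1 - β - (Real.sqrt q - Real.sqrt r) ^ 2 := by
  unfold deltaExp; rw [if_neg (not_le.mpr h)]

lemma delta_low' (β r q : ℝ) (h : q ≤ r) : deltaExp β r q = 1 - β := by
  unfold deltaExp; rw [if_pos h]

lemma delta_le' (β r q : ℝ) : deltaExp β r q ≤ 1 - β := by
  unfold deltaExp; split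
  · exact le_rfl
  · nlinarith [sq_nonneg (Real.sqrt q - Real.sqrt r)]

/-- forward direction, dense-β regime arithmetic -/
lemma fwd_aux (u a s : ℝ) (hu : 0 < u) (hu12 : u < 1 / 2) (ha : 0 < a)
    (h1 : (s - a) ^ 2 < u ^ 2) (h2 : 1 - 2 * u ^ 2 + (s - 2 * a) ^ 2 < 2 * a ^ 2) :
    (1 - u) ^ 2 < a ^ 2 := by
  have hua : u < a := by nlinarith [sq_nonneg (s - 2 * a)]
  have hsau : s < a + u := by nlinarith
  have hs2a : s < 2 * a := by nlinarith
  have hkey : (a - u) ^ 2 < (s - 2 * a) ^ 2 := by nlinarith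
  have h3 : 1 < (a + u) ^ 2 := by nlinarith
  have h4 : 1 - u < a := by nlinarith
  nlinarith


set_option maxHeartbeats 1000000 in
/-- Maximin characterization of the phase boundary: γ takes a positive value
on [0,1] iff r > ρ*(β), in which case q*(r,β) attains the maximum of γ on [0,1]. -/
theorem stmt11 (β r : ℝ) (hβ1 : 1 / 2 < β) (hβ2 : β < 1) (hr1 : 0 < r) (hr2 : r < 1) :
    ((∃ q ∈ Set.Icc (0 : ℝ) 1, 0 < gammaExp β r q) ↔ rhoStar β < r) ∧
    (rhoStar β < r →
      qStar r β ∈ Set.Icc (0 : ℝ) 1 ∧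
        ∀ q ∈ Set.Icc (0 : ℝ) 1, gammaExp β r q ≤ gammaExp β r (qStar r β)) := by
  set a := Real.sqrt r with ha_def
  have ha : 0 < a := Real.sqrt_pos.mpr hr1
  have ha2 : a ^ 2 = r := Real.sq_sqrt hr1.le
  set u := Real.sqrt (1 - β) with hu_def
  have hu : 0 < u := Real.sqrt_pos.mpr (by linarith)
  have hu2 : u ^ 2 = 1 - β := Real.sq_sqrt (by linarith)
  have hρ : rhoStar β = if β ≤ 3 / 4 then β - 1 / 2 else (1 - u) ^ 2 := by
    unfold rhoStar; rw [if_neg (by linarith : ¬β ≤ 1 / 2)]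
  clear_value a u
  -- key identity: for q = s², r = a²
  have hident : ∀ s q : ℝ, s ^ 2 = q →
      1 - β - (s - a) ^ 2 - (1 - q) / 2 = 1 / 2 - β + a ^ 2 - (s - 2 * a) ^ 2 / 2 := by
    intro s q hs2; linear_combination (-1 / 2 : ℝ) * hs2
  have key : rhoStar β < r → qStar r β ∈ Set.Icc (0 : ℝ) 1 ∧
      0 < gammaExp β r (qStar r β) ∧
      ∀ q ∈ Set.Icc (0 : ℝ) 1, gammaExp β r q ≤ gammaExp β r (qStar r β) := by
    intro hlt
    by_cases hc : r ≤ β / 3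
    · -- case A : q* = 4r
      have hqs : qStar r β = 4 * r := if_pos hc
      have hβ34 : β < 3 / 4 := by
        by_contra hb
        push_neg at hb
        rcases eq_or_lt_of_le hb with hb' | hb'
        · rw [hρ, if_pos (le_of_eq hb'.symm)] at hlt; linarith
        · rw [hρ, if_neg (by linarith)] at hlt
          have hu12 : u < 1 / 2 := by nlinarith
          nlinarith
      have hrb : β - 1 / 2 < r := by rw [hρ, if_pos (by linarith)] at hlt; exact hlt
      have h4r : Real.sqrt (4 * r) = 2 * a := by
        rw [show (4 : ℝ) * r = (2 * a) ^ 2 by nlinarith, Real.sqrt_sq (by positivity)]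
      have hγs : gammaExp β r (4 * r) = 1 / 2 - β + r := by
        rw [gamma_min', delta_high' β r _ (by linarith), h4r, ← ha_def,
          min_eq_left (by nlinarith)]
        nlinarith
      rw [hqs, hγs]
      refine ⟨⟨by linarith, by linarith⟩, by linarith, ?_⟩
      rintro q ⟨hq0, hq1⟩
      have hle := (gamma_min' β r q).le.trans (min_le_left _ _)
      by_cases hqr : q ≤ r
      · rw [delta_low' β r q hqr] at hle; linarith
      · push_neg at hqr
        have hs2 : Real.sqrt q ^ 2 = q := Real.sq_sqrt (by linarith)
        rw [delta_high' β r q hqr, ← ha_def] at hle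
        have := hident (Real.sqrt q) q hs2
        have hsq := sq_nonneg (Real.sqrt q - 2 * a)
        linarith
    · -- case B : q* = (β+r)²/(4r)
      push_neg at hc
      have hqs : qStar r β = (β + r) ^ 2 / (4 * r) := if_neg (not_le.mpr hc)
      by_cases hβr : β ≤ r
      · -- B1
        have hq1 : (β + r) ^ 2 ≤ 4 * r := by nlinarith
        have hqsr : qStar r β ≤ r := by
          rw [hqs, div_le_iff₀ (by linarith)]; nlinarith
        have hqsβ : β ≤ qStar r β := by
          rw [hqs, le_div_iff₀ (by linarith)]; nlinarith [sq_nonneg (β - r)]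
        have hγs : gammaExp β r (qStar r β) = (1 - β) / 2 := by
          rw [gamma_min', delta_low' β r _ hqsr, min_eq_right (by linarith)]
        rw [hγs]
        refine ⟨⟨by rw [hqs]; positivity, ?_⟩, by linarith, ?_⟩
        · rw [hqs, div_le_one (by linarith)]; exact hq1
        · rintro q ⟨hq0, hq1'⟩
          have hle := (gamma_min' β r q).le.trans (min_le_right _ _)
          have := delta_le' β r q
          linarith
      · -- B2 : β/3 < r < β
        push_neg at hβr
        have hfar : (1 - u) ^ 2 < r := by
          rw [hρ] at hlt
          by_cases hb : β ≤ 3 / 4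
          · rw [if_pos hb] at hlt
            have hu12 : 1 / 2 ≤ u := by nlinarith
            nlinarith
          · rwa [if_neg hb] at hlt
        have ha1 : a < 1 := by nlinarith
        have hau : 1 - u < a := by nlinarith [sq_nonneg (1 - u)]
        have hkey : (β + r) ^ 2 < 4 * r := by nlinarith [sq_nonneg (1 - a)]
        have hqs1 : qStar r β < 1 := by rw [hqs, div_lt_one (by linarith)]; exact hkey
        have hrqs : r < qStar r β := by
          rw [hqs, lt_div_iff₀ (by linarith)]; nlinarith
        set t := (β + r) / (2 * a) with ht_def
        have h2at : 2 * a * t = β + r := by rw [ht_def]; field_simp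
        have ht2 : t ^ 2 = qStar r β := by
          rw [hqs, ht_def, div_pow]; congr 1; nlinarith
        have ht0 : 0 ≤ t := by
          rw [ht_def]; exact div_nonneg (by linarith) (by linarith)
        have hst : Real.sqrt (qStar r β) = t := by
          rw [← ht2, Real.sqrt_sq ht0]
        have hta : a < t := by
          have h := Real.sqrt_lt_sqrt hr1.le hrqs
          rwa [hst, ← ha_def] at h
        have ht2a : t ≤ 2 * a := by rw [ht_def, div_le_iff₀ (by linarith)]; nlinarith
        clear_value t
        have hδs : deltaExp β r (qStar r β) = 1 - qStar r β := by
          rw [delta_high' β r _ hrqs, hst, ← ha_def, ← ht2]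
          linear_combination h2at - ha2
        have hγs : gammaExp β r (qStar r β) = (1 - qStar r β) / 2 := by
          rw [gamma_min', hδs, min_eq_right (by linarith)]
        rw [hγs]
        refine ⟨⟨by rw [hqs]; positivity, hqs1.le⟩, by linarith, ?_⟩
        rintro q ⟨hq0, hq1'⟩
        by_cases hqq : q ≤ qStar r β
        · have hle := (gamma_min' β r q).le.trans (min_le_left _ _)
          by_cases hqr : q ≤ r
          · rw [delta_low' β r q hqr] at hle
            have hq2β : qStar r β ≤ 2 * β - r := by
              rw [hqs, div_le_iff₀ (by linarith)]
              nlinarith [mul_nonneg (by linarith : (0:ℝ) ≤ 5 * r - β)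
                (by linarith : (0:ℝ) ≤ β - r)]
            linarith
          · push_neg at hqr
            have hs2 : Real.sqrt q ^ 2 = q := Real.sq_sqrt (by linarith)
            have hss : Real.sqrt q ≤ t := by
              rw [← hst]; exact Real.sqrt_le_sqrt hqq
            have hsa : a ≤ Real.sqrt q := by
              rw [ha_def]; exact Real.sqrt_le_sqrt hqr.le
            rw [delta_high' β r q hqr, ← ha_def] at hle
            have hmono : (t - 2 * a) ^ 2 ≤ (Real.sqrt q - 2 * a) ^ 2 := by
              nlinarith [mul_nonneg (sub_nonneg.mpr hss)
                (by linarith : (0:ℝ) ≤ 4 * a - Real.sqrt q - t)]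
            have hval : 1 / 2 - β + a ^ 2 - (t - 2 * a) ^ 2 / 2 = (1 - qStar r β) / 2 := by
              rw [← ht2]; linear_combination h2at - ha2
            have := hident (Real.sqrt q) q hs2
            linarith
        · push_neg at hqq
          have hle := (gamma_min' β r q).le.trans (min_le_right _ _)
          have hs2 : Real.sqrt q ^ 2 = q := Real.sq_sqrt (by linarith)
          have hts : t ≤ Real.sqrt q := by
            rw [← hst]; exact Real.sqrt_le_sqrt hqq.le
          rw [delta_high' β r q (by linarith), ← ha_def] at hle
          have hss : (t - a) ^ 2 ≤ (Real.sqrt q - a) ^ 2 := by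
            nlinarith [mul_nonneg (sub_nonneg.mpr hts)
              (by linarith : (0:ℝ) ≤ Real.sqrt q + t - 2 * a)]
          have hδt : 1 - β - (t - a) ^ 2 = 1 - qStar r β := by
            rw [← ht2]; linear_combination h2at - ha2
          linarith
  -- forward direction
  have fwd : ∀ q ∈ Set.Icc (0 : ℝ) 1, 0 < gammaExp β r q → rhoStar β < r := by
    rintro q ⟨hq0, hq1⟩ hpos
    rw [gamma_min', lt_min_iff] at hpos
    obtain ⟨hA, hB⟩ := hpos
    by_cases hqr : q ≤ r
    · rw [delta_low' β r q hqr] at hA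
      rw [hρ]; split
      · linarith
      · rename_i hb; push_neg at hb
        have hu12 : u < 1 / 2 := by nlinarith
        nlinarith [mul_pos hu (by linarith : (0:ℝ) < 2 - 3 * u)]
    · push_neg at hqr
      have hs2 : Real.sqrt q ^ 2 = q := Real.sq_sqrt (by linarith)
      rw [delta_high' β r q hqr, ← ha_def] at hA hB
      have hid := hident (Real.sqrt q) q hs2
      have h2a : 1 - 2 * u ^ 2 + (Real.sqrt q - 2 * a) ^ 2 < 2 * a ^ 2 := by linarith
      have hBu : (Real.sqrt q - a) ^ 2 < u ^ 2 := by linarith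
      rw [hρ]; split
      · have := sq_nonneg (Real.sqrt q - 2 * a)
        linarith
      · rename_i hb; push_neg at hb
        have hu12 : u < 1 / 2 := by nlinarith
        have := fwd_aux u a (Real.sqrt q) hu hu12 ha hBu h2a
        linarith
  constructor
  · constructor
    · rintro ⟨q, hq, hγ⟩; exact fwd q hq hγ
    · intro h; exact ⟨qStar r β, (key h).1, (key h).2.1⟩
  · intro h; exact ⟨(key h).1, (key h).2.2⟩
end

section
/- (Asymptotic true positive rate above the signal strength.) Fix 0 < β < 1 and 0 < r < q. In the ARW model, TPR(t_p(q)) / ( (1/√(2π)) · p^{−β−(√q−√r)²} / ((√q−√r)·√(2·log p)) ) → 1 as p → ∞, where TPR is computed with ε = ε_p = p^{−β}, τ = τ_p = √(2r log p). -/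
open Filter Set MeasureTheory

lemma gaussPDF_pos (t : ℝ) : 0 < gaussPDF t := by
  unfold gaussPDF
  positivity

lemma gaussPDF_eq (t : ℝ) : gaussPDF t = (Real.sqrt (2 * Real.pi))⁻¹ * Real.exp (-(1/2) * t ^ 2) := by
  unfold gaussPDF; ring_nf

lemma integrable_gaussPDF : Integrable gaussPDF := by
  have h := (integrable_exp_neg_mul_sq (b := 1/2) (by norm_num)).const_mul (Real.sqrt (2 * Real.pi))⁻¹
  refine h.congr (Filter.Eventually.of_forall fun t => ?_)
  rw [gaussPDF_eq]

lemma integral_gaussPDF : ∫ t, gaussPDF t = 1 := by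
  have h : ∫ t, gaussPDF t = (Real.sqrt (2 * Real.pi))⁻¹ * ∫ t, Real.exp (-(1/2) * t ^ 2) := by
    rw [← integral_const_mul]; exact MeasureTheory.integral_congr_ae (Filter.Eventually.of_forall fun t => gaussPDF_eq t)
  rw [h, integral_gaussian]
  have : Real.pi / (1/2) = 2 * Real.pi := by ring
  rw [this, inv_mul_cancel₀ (by positivity)]

lemma hasDerivAt_gaussPDF (t : ℝ) : HasDerivAt gaussPDF (-t * gaussPDF t) t := by
  unfold gaussPDF
  have h : HasDerivAt (fun t : ℝ => -(t ^ 2) / 2) (-t) t := by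
    have := ((hasDerivAt_pow 2 t).neg).div_const 2
    simpa using this.congr_deriv (by ring)
  have := (h.exp).const_mul (Real.sqrt (2 * Real.pi))⁻¹
  refine this.congr_deriv ?_
  ring

lemma one_sub_normCDF (x : ℝ) : 1 - normCDF x = ∫ t in Set.Ioi x, gaussPDF t := by
  have := intervalIntegral.integral_Iic_add_Ioi (b := x) integrable_gaussPDF.integrableOn integrable_gaussPDF.integrableOn
  rw [integral_gaussPDF] at this
  unfold normCDF
  linarith

lemma normCDF_neg (y : ℝ) : normCDF (-y) = ∫ t in Set.Ioi y, gaussPDF t := by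
  unfold normCDF
  rw [← integral_comp_neg_Ioi]
  congr 1; ext t; unfold gaussPDF; rw [neg_pow]; ring_nf
lemma continuous_gaussPDF : Continuous gaussPDF := by
  unfold gaussPDF; fun_prop

lemma tendsto_gaussPDF_atTop : Filter.Tendsto gaussPDF atTop (nhds 0) := by
  have h1 : Filter.Tendsto (fun t : ℝ => t ^ 2 / 2) atTop atTop :=
    (tendsto_pow_atTop (by norm_num)).atTop_div_const (by norm_num)
  have h2 : Filter.Tendsto (fun t : ℝ => Real.exp (-(t ^ 2) / 2)) atTop (nhds 0) := by
    have := Real.tendsto_exp_neg_atTop_nhds_zero.comp h1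
    refine this.congr (fun t => ?_)
    simp [Function.comp, neg_div]
  have := h2.const_mul (Real.sqrt (2 * Real.pi))⁻¹
  rw [mul_zero] at this
  exact this

lemma measurable_gaussPDF : Measurable gaussPDF := continuous_gaussPDF.measurable

lemma tail_upper {x : ℝ} (hx : 0 < x) :
    ∫ t in Set.Ioi x, gaussPDF t ≤ gaussPDF x / x := by
  -- f t = -(gaussPDF t / t), f' t = gaussPDF t + gaussPDF t * (t⁻¹)^2
  set f : ℝ → ℝ := fun t => -(gaussPDF t / t) with hf
  set f' : ℝ → ℝ := fun t => gaussPDF t + gaussPDF t * (t⁻¹) ^ 2 with hf'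
  have hderiv : ∀ t ∈ Set.Ioi x, HasDerivAt f (f' t) t := by
    intro t ht
    have htne : t ≠ 0 := ne_of_gt (lt_trans hx ht)
    have h1 : HasDerivAt (fun t => gaussPDF t / t)
        ((-t * gaussPDF t * t - gaussPDF t * 1) / t ^ 2) t :=
      (hasDerivAt_gaussPDF t).div (hasDerivAt_id t) htne
    have := h1.neg
    refine this.congr_deriv ?_
    simp only [hf']
    field_simp
    ring
  have hint : IntegrableOn f' (Set.Ioi x) := by
    refine Integrable.mono' ((integrable_gaussPDF.integrableOn).const_mul (1 + (x⁻¹)^2)) ?_ ?_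
    · exact ((measurable_gaussPDF.add (measurable_gaussPDF.mul
        (measurable_inv.pow_const 2))).aestronglyMeasurable)
    · refine (ae_restrict_iff' measurableSet_Ioi).2 (Filter.Eventually.of_forall fun t ht => ?_)
      have ht' : x < t := ht
      have ht0 : 0 < t := lt_trans hx ht'
      have hle : (t⁻¹)^2 ≤ (x⁻¹)^2 := by
        have := inv_anti₀ hx ht'.le
        exact pow_le_pow_left₀ (by positivity) this 2
      have hg := (gaussPDF_pos t).le
      have : |f' t| = gaussPDF t + gaussPDF t * (t⁻¹)^2 := by
        rw [abs_of_nonneg]; positivity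
      rw [Real.norm_eq_abs, this]
      nlinarith [gaussPDF_pos t]
  have hcont : ContinuousWithinAt f (Set.Ici x) x := by
    apply ContinuousAt.continuousWithinAt
    exact ((continuous_gaussPDF.continuousAt).div continuousAt_id (ne_of_gt hx)).neg
  have htend : Filter.Tendsto f atTop (nhds 0) := by
    have := (tendsto_gaussPDF_atTop.mul tendsto_inv_atTop_zero).neg
    simp only [mul_zero, neg_zero] at this
    refine this.congr (fun t => ?_)
    simp [hf, div_eq_mul_inv]
  have hFTC := integral_Ioi_of_hasDerivAt_of_tendsto hcont hderiv hint htend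
  have hmono : ∫ t in Set.Ioi x, gaussPDF t ≤ ∫ t in Set.Ioi x, f' t := by
    refine setIntegral_mono_on integrable_gaussPDF.integrableOn hint measurableSet_Ioi ?_
    intro t ht
    have : 0 ≤ gaussPDF t * (t⁻¹)^2 := mul_nonneg (gaussPDF_pos t).le (by positivity)
    simp only [hf']; linarith
  rw [hFTC] at hmono
  simpa [hf] using hmono

lemma tail_lower {x : ℝ} (hx : 0 < x) :
    (x⁻¹ - (x⁻¹) ^ 3) * gaussPDF x ≤ ∫ t in Set.Ioi x, gaussPDF t := by
  set f : ℝ → ℝ := fun t => ((t⁻¹) ^ 3 - t⁻¹) * gaussPDF t with hf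
  set f' : ℝ → ℝ := fun t => (1 - 3 * (t⁻¹) ^ 4) * gaussPDF t with hf'
  have hderiv : ∀ t ∈ Set.Ioi x, HasDerivAt f (f' t) t := by
    intro t ht
    have htne : t ≠ 0 := ne_of_gt (lt_trans hx ht)
    have hinv : HasDerivAt (fun y : ℝ => y⁻¹) (-(t ^ 2)⁻¹) t := hasDerivAt_inv htne
    have h1 : HasDerivAt (fun y : ℝ => (y⁻¹) ^ 3 - y⁻¹)
        ((3:ℕ) * (t⁻¹) ^ 2 * (-(t ^ 2)⁻¹) - (-(t ^ 2)⁻¹)) t := (hinv.pow 3).sub hinv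
    have h2 := h1.mul (hasDerivAt_gaussPDF t)
    refine h2.congr_deriv ?_
    simp only [hf']
    field_simp
    ring
  have hint : IntegrableOn f' (Set.Ioi x) := by
    refine Integrable.mono' ((integrable_gaussPDF.integrableOn).const_mul (1 + 3 * (x⁻¹)^4)) ?_ ?_
    · exact ((measurable_const.sub ((measurable_inv.pow_const 4).const_mul 3)).mul
        measurable_gaussPDF).aestronglyMeasurable
    · refine (ae_restrict_iff' measurableSet_Ioi).2 (Filter.Eventually.of_forall fun t ht => ?_)
      have ht' : x < t := ht
      have ht0 : 0 < t := lt_trans hx ht'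
      have hle : (t⁻¹)^4 ≤ (x⁻¹)^4 := by
        have := inv_anti₀ hx ht'.le
        exact pow_le_pow_left₀ (by positivity) this 4
      have h1 : |1 - 3 * (t⁻¹)^4| ≤ 1 + 3 * (x⁻¹)^4 := by
        rw [abs_le]
        constructor <;> nlinarith [sq_nonneg (t⁻¹^2), pow_pos (inv_pos.mpr ht0) 4]
      calc ‖f' t‖ = |1 - 3 * (t⁻¹)^4| * gaussPDF t := by
            rw [Real.norm_eq_abs, hf', abs_mul, abs_of_nonneg (gaussPDF_pos t).le]
        _ ≤ (1 + 3 * (x⁻¹)^4) * gaussPDF t :=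
            mul_le_mul_of_nonneg_right h1 (gaussPDF_pos t).le
  have hcont : ContinuousWithinAt f (Set.Ici x) x := by
    apply ContinuousAt.continuousWithinAt
    exact (((continuousAt_inv₀ (ne_of_gt hx)).pow 3).sub
      (continuousAt_inv₀ (ne_of_gt hx))).mul continuous_gaussPDF.continuousAt
  have htend : Filter.Tendsto f atTop (nhds 0) := by
    have h3 : Filter.Tendsto (fun t : ℝ => (t⁻¹) ^ 3 - t⁻¹) atTop (nhds (0 ^ 3 - 0)) :=
      ((tendsto_inv_atTop_zero.pow 3).sub tendsto_inv_atTop_zero)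
    have h4 : Filter.Tendsto f atTop (nhds (((0:ℝ)^3 - 0) * 0)) := h3.mul tendsto_gaussPDF_atTop
    norm_num at h4
    exact h4
  have hFTC := integral_Ioi_of_hasDerivAt_of_tendsto hcont hderiv hint htend
  have hmono : ∫ t in Set.Ioi x, f' t ≤ ∫ t in Set.Ioi x, gaussPDF t := by
    refine setIntegral_mono_on hint integrable_gaussPDF.integrableOn measurableSet_Ioi ?_
    intro t ht
    have ht0 : 0 < t := lt_trans hx ht
    have h0 : 0 ≤ 3 * (t⁻¹)^4 * gaussPDF t := mul_nonneg (by positivity) (gaussPDF_pos t).le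
    simp only [hf']
    nlinarith [gaussPDF_pos t]
  rw [hFTC] at hmono
  have : 0 - f x = (x⁻¹ - (x⁻¹)^3) * gaussPDF x := by simp [hf]; ring
  linarith [hmono, this ▸ hmono]

lemma tail_nonneg (x : ℝ) : 0 ≤ ∫ t in Set.Ioi x, gaussPDF t :=
  setIntegral_nonneg measurableSet_Ioi fun t _ => (gaussPDF_pos t).le

lemma mills :
    Tendsto (fun x : ℝ => (∫ t in Set.Ioi x, gaussPDF t) * x / gaussPDF x) atTop (nhds 1) := by
  have hg : Tendsto (fun x : ℝ => 1 - (x⁻¹) ^ 2) atTop (nhds 1) := by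
    have : Tendsto (fun x : ℝ => (x⁻¹) ^ 2) atTop (nhds 0) := by
      simpa using (tendsto_inv_atTop_zero : Filter.Tendsto (fun r : ℝ => r⁻¹) atTop (nhds 0)).pow 2
    simpa using ((tendsto_const_nhds : Filter.Tendsto (fun _ : ℝ => (1:ℝ)) atTop (nhds 1)).sub this)
  refine tendsto_of_tendsto_of_tendsto_of_le_of_le' hg tendsto_const_nhds ?_ ?_
  · filter_upwards [eventually_gt_atTop 0] with x hx
    have hl := tail_lower hx
    have hφ := gaussPDF_pos x
    rw [le_div_iff₀ hφ]
    calc (1 - (x⁻¹) ^ 2) * gaussPDF x = ((x⁻¹ - (x⁻¹) ^ 3) * gaussPDF x) * x := by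
          field_simp
      _ ≤ (∫ t in Set.Ioi x, gaussPDF t) * x := mul_le_mul_of_nonneg_right hl hx.le
  · filter_upwards [eventually_gt_atTop 0] with x hx
    have hu := tail_upper hx
    have hφ := gaussPDF_pos x
    rw [div_le_one hφ]
    calc (∫ t in Set.Ioi x, gaussPDF t) * x ≤ (gaussPDF x / x) * x :=
          mul_le_mul_of_nonneg_right hu hx.le
      _ = gaussPDF x := by field_simp

lemma tendsto_sqrt_atTop : Tendsto Real.sqrt atTop atTop :=
  (tendsto_rpow_atTop (by norm_num : (0:ℝ) < 1/2)).congr fun x => (Real.sqrt_eq_rpow x).symm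

/-- Asymptotic true positive rate above the signal strength (q > r). -/
theorem stmt14 (β r q : ℝ) (hβ1 : 0 < β) (hβ2 : β < 1) (hr : 0 < r) (hq : r < q) :
    Filter.Tendsto
      (fun p : ℕ =>
        tprFn (epsP β p) (tauP r p) (tP q p) /
          ((Real.sqrt (2 * Real.pi))⁻¹ * (p : ℝ) ^ (-β - (Real.sqrt q - Real.sqrt r) ^ 2) /
            ((Real.sqrt q - Real.sqrt r) * Real.sqrt (2 * Real.log p))))
      Filter.atTop (nhds 1) := by
  have hq0 : 0 < q := hr.trans hq
  have hsr : 0 < Real.sqrt r := Real.sqrt_pos.2 hr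
  have hsq : 0 < Real.sqrt q := Real.sqrt_pos.2 hq0
  set s : ℝ := Real.sqrt q - Real.sqrt r with hs_def
  set u : ℝ := Real.sqrt q + Real.sqrt r with hu_def
  have hs : 0 < s := sub_pos.2 (Real.sqrt_lt_sqrt hr.le hq)
  have hu : 0 < u := by positivity
  have hsu : s ≤ u := by rw [hs_def, hu_def]; linarith
  set X : ℕ → ℝ := fun p => s * Real.sqrt (2 * Real.log p) with hX_def
  set Y : ℕ → ℝ := fun p => u * Real.sqrt (2 * Real.log p) with hY_def
  set A : ℕ → ℝ := fun p => (∫ t in Set.Ioi (X p), gaussPDF t) * X p / gaussPDF (X p) with hA_def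
  set B : ℕ → ℝ := fun p => (∫ t in Set.Ioi (Y p), gaussPDF t) * X p / gaussPDF (X p) with hB_def
  -- facts for p ≥ 2
  have hfacts : ∀ p : ℕ, 2 ≤ p → 0 < Real.log p := by
    intro p hp
    exact Real.log_pos (by exact_mod_cast lt_of_lt_of_le one_lt_two hp)
  have hXtop : Tendsto X atTop atTop := by
    have hlog : Tendsto (fun p : ℕ => Real.log p) atTop atTop :=
      Real.tendsto_log_atTop.comp tendsto_natCast_atTop_atTop
    have h2 : Tendsto (fun p : ℕ => 2 * Real.log p) atTop atTop := hlog.const_mul_atTop two_pos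
    exact (tendsto_sqrt_atTop.comp h2).const_mul_atTop hs
  have hA : Tendsto A atTop (nhds 1) := mills.comp hXtop
  have hc4 : (0:ℝ) < 4 * Real.sqrt q * Real.sqrt r := by positivity
  -- ratio of densities
  have hφratio : ∀ p : ℕ, 2 ≤ p →
      gaussPDF (Y p) / gaussPDF (X p) = (p : ℝ) ^ (-(4 * Real.sqrt q * Real.sqrt r)) := by
    intro p hp
    have hL := hfacts p hp
    have hp0 : (0:ℝ) < p := by positivity
    have hw2 : Real.sqrt (2 * Real.log p) ^ 2 = 2 * Real.log p :=
      Real.sq_sqrt (by linarith)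
    have hcne : (Real.sqrt (2 * Real.pi))⁻¹ ≠ 0 := by
      have : (0:ℝ) < Real.sqrt (2 * Real.pi) := Real.sqrt_pos.2 (by positivity)
      positivity
    rw [hX_def, hY_def]
    unfold gaussPDF
    rw [mul_div_mul_left _ _ hcne, ← Real.exp_sub, Real.rpow_def_of_pos hp0]
    congr 1
    rw [mul_pow, mul_pow, hw2, hs_def, hu_def]
    ring
  have hB : Tendsto B atTop (nhds 0) := by
    have hE : Tendsto (fun p : ℕ => (p : ℝ) ^ (-(4 * Real.sqrt q * Real.sqrt r))) atTop
        (nhds 0) := (tendsto_rpow_neg_atTop hc4).comp tendsto_natCast_atTop_atTop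
    refine tendsto_of_tendsto_of_tendsto_of_le_of_le' tendsto_const_nhds hE ?_ ?_
    · filter_upwards [eventually_ge_atTop 2] with p hp
      have hL := hfacts p hp
      have hw : 0 < Real.sqrt (2 * Real.log p) := Real.sqrt_pos.2 (by linarith)
      have hXp : 0 < X p := mul_pos hs hw
      exact div_nonneg (mul_nonneg (tail_nonneg _) hXp.le) (gaussPDF_pos _).le
    · filter_upwards [eventually_ge_atTop 2] with p hp
      have hL := hfacts p hp
      have hw : 0 < Real.sqrt (2 * Real.log p) := Real.sqrt_pos.2 (by linarith)
      have hXp : 0 < X p := mul_pos hs hw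
      have hYp : 0 < Y p := mul_pos hu hw
      have hXY : X p ≤ Y p := mul_le_mul_of_nonneg_right hsu hw.le
      have h1 := tail_upper hYp
      calc B p ≤ (gaussPDF (Y p) / Y p) * X p / gaussPDF (X p) :=
            (div_le_div_iff_of_pos_right (gaussPDF_pos _)).2 (mul_le_mul_of_nonneg_right h1 hXp.le)
        _ ≤ gaussPDF (Y p) / gaussPDF (X p) := by
            have h2 : gaussPDF (Y p) / Y p * X p ≤ gaussPDF (Y p) := by
              rw [div_mul_eq_mul_div, div_le_iff₀ hYp]
              exact mul_le_mul_of_nonneg_left hXY (gaussPDF_pos _).le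
            exact (div_le_div_iff_of_pos_right (gaussPDF_pos _)).2 h2
        _ = (p : ℝ) ^ (-(4 * Real.sqrt q * Real.sqrt r)) := hφratio p hp
  -- eventual equality
  have heq : ∀ᶠ p : ℕ in atTop,
      tprFn (epsP β p) (tauP r p) (tP q p) /
          ((Real.sqrt (2 * Real.pi))⁻¹ * (p : ℝ) ^ (-β - s ^ 2) /
            (s * Real.sqrt (2 * Real.log p))) = A p + B p := by
    filter_upwards [eventually_ge_atTop 2] with p hp
    have hL := hfacts p hp
    have hp0 : (0:ℝ) < p := by positivity
    have hw : 0 < Real.sqrt (2 * Real.log p) := Real.sqrt_pos.2 (by linarith)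
    have hw2 : Real.sqrt (2 * Real.log p) ^ 2 = 2 * Real.log p :=
      Real.sq_sqrt (by linarith)
    have hXp : 0 < X p := mul_pos hs hw
    have hYp : 0 < Y p := mul_pos hu hw
    have htq : tP q p = Real.sqrt q * Real.sqrt (2 * Real.log p) := by
      rw [tP, show 2 * q * Real.log p = q * (2 * Real.log p) by ring, Real.sqrt_mul hq0.le]
    have htr : tauP r p = Real.sqrt r * Real.sqrt (2 * Real.log p) := by
      rw [tauP, show 2 * r * Real.log p = r * (2 * Real.log p) by ring, Real.sqrt_mul hr.le]
    have hsub : tP q p - tauP r p = X p := by rw [htq, htr, hX_def, hs_def]; ring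
    have hnegsum : -tP q p - tauP r p = -(Y p) := by rw [htq, htr, hY_def, hu_def]; ring
    have hφX : gaussPDF (X p) = (Real.sqrt (2 * Real.pi))⁻¹ * (p : ℝ) ^ (-(s ^ 2)) := by
      unfold gaussPDF
      congr 1
      rw [Real.rpow_def_of_pos hp0]
      congr 1
      rw [hX_def, mul_pow, hw2]
      ring
    have hrpow : (p : ℝ) ^ (-β - s ^ 2) = (p : ℝ) ^ (-β) * (p : ℝ) ^ (-(s ^ 2)) := by
      rw [← Real.rpow_add hp0]
      ring_nf
    have hεpos : (0:ℝ) < (p : ℝ) ^ (-β) := Real.rpow_pos_of_pos hp0 _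
    have hppos : (0:ℝ) < (p : ℝ) ^ (-(s^2)) := Real.rpow_pos_of_pos hp0 _
    have hcpos : (0:ℝ) < Real.sqrt (2 * Real.pi) := Real.sqrt_pos.2 (by positivity)
    have hXpe : X p = s * Real.sqrt (2 * Real.log p) := rfl
    rw [tprFn, psiBar, one_sub_normCDF, hsub, hnegsum, normCDF_neg, epsP, hrpow]
    simp only [hA_def, hB_def]
    rw [hφX, hXpe]
    field_simp
  have hfin : Tendsto (fun p : ℕ => A p + B p) atTop (nhds 1) := by
    have := hA.add hB
    simpa using this
  exact Tendsto.congr' (by filter_upwards [heq] with p h using h.symm) hfin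
end

section
/- (Asymptotic tangent of the feature-detection ROC curve at threshold t_p(q).) Fix 0 < β < 1, 0 < r < 1, and q > 0 with q ≠ r, and let γ₀(q;r,β) = −β − r + 2√(rq). In the ARW model, 2 · p^{−γ₀(q;r,β)} · TPR'(t_p(q)) / FPR'(t_p(q)) → 1 as p → ∞, where TPR'(t) = ε_p(φ(t−τ_p)+φ(t+τ_p)) and FPR'(t) = 2(1−ε_p)φ(t). -/
open Filter Set MeasureTheory

/-- Asymptotic tangent of the ROC curve: TPR'/FPR' ∼ (1/2) p^{γ₀}. -/
theorem stmt16 (β r q : ℝ) (hβ1 : 0 < β) (hβ2 : β < 1) (hr1 : 0 < r) (hr2 : r < 1)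
    (hq : 0 < q) (hqr : q ≠ r) :
    Filter.Tendsto
      (fun p : ℕ =>
        2 * (p : ℝ) ^ (-(-β - r + 2 * Real.sqrt (r * q))) *
          (tprD (epsP β p) (tauP r p) (tP q p) / fprD (epsP β p) (tP q p)))
      Filter.atTop (nhds 1) := by
  set s := Real.sqrt (r * q) with hs
  have hs0 : 0 < s := Real.sqrt_pos.mpr (mul_pos hr1 hq)
  have h1 : Tendsto (fun p : ℕ => ((p : ℝ)) ^ (-(4 * s))) atTop (nhds 0) :=
    (tendsto_rpow_neg_atTop (by positivity)).comp tendsto_natCast_atTop_atTop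
  have h2 : Tendsto (fun p : ℕ => ((p : ℝ)) ^ (-β)) atTop (nhds 0) :=
    (tendsto_rpow_neg_atTop hβ1).comp tendsto_natCast_atTop_atTop
  have hmain : Tendsto (fun p : ℕ => (1 + (p : ℝ) ^ (-(4 * s))) / (1 - (p : ℝ) ^ (-β)))
      atTop (nhds 1) := by
    have := Filter.Tendsto.div
      ((tendsto_const_nhds : Tendsto (fun _ : ℕ => (1:ℝ)) atTop (nhds 1)).add h1)
      ((tendsto_const_nhds : Tendsto (fun _ : ℕ => (1:ℝ)) atTop (nhds 1)).sub h2)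
      (show (1:ℝ) - 0 ≠ 0 by norm_num)
    simp only [add_zero, sub_zero, div_one] at this
    exact this
  refine hmain.congr' ?_
  filter_upwards [eventually_ge_atTop 2] with p hp
  have hP : (1 : ℝ) < (p : ℝ) := by exact_mod_cast Nat.lt_of_lt_of_le one_lt_two hp
  have hP0 : (0 : ℝ) < (p : ℝ) := by linarith
  set L := Real.log (p : ℝ) with hLdef
  have hL : 0 < L := Real.log_pos hP
  have hrpow : ∀ x : ℝ, (p : ℝ) ^ x = Real.exp (x * L) := fun x => by
    rw [Real.rpow_def_of_pos hP0, mul_comm]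
  have ht2 : tP q p ^ 2 = 2 * q * L := Real.sq_sqrt (by positivity)
  have hτ2 : tauP r p ^ 2 = 2 * r * L := Real.sq_sqrt (by positivity)
  have htτ : tP q p * tauP r p = 2 * s * L := by
    unfold tP tauP
    rw [← Real.sqrt_mul (by positivity), show 2 * q * Real.log p * (2 * r * Real.log p)
        = (2 * s * Real.log p) ^ 2 by
      have h := Real.sq_sqrt (le_of_lt (mul_pos hr1 hq))
      rw [hs]; linear_combination (-4 * Real.log (p:ℝ) ^ 2) * h]
    exact Real.sqrt_sq (by positivity)
  set c := (Real.sqrt (2 * Real.pi))⁻¹ with hc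
  have hc0 : c ≠ 0 := by
    rw [hc]
    positivity
  have e1 : gaussPDF (tP q p - tauP r p) = c * Real.exp ((-q + 2 * s - r) * L) := by
    unfold gaussPDF
    rw [← hc]
    congr 1
    have : (tP q p - tauP r p) ^ 2 = 2 * q * L - 2 * (2 * s * L) + 2 * r * L := by
      ring_nf; linear_combination ht2 + hτ2 - 2 * htτ
    rw [this]; ring
  have e2 : gaussPDF (tP q p + tauP r p) = c * Real.exp ((-q - 2 * s - r) * L) := by
    unfold gaussPDF
    rw [← hc]
    congr 1
    have : (tP q p + tauP r p) ^ 2 = 2 * q * L + 2 * (2 * s * L) + 2 * r * L := by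
      ring_nf; linear_combination ht2 + hτ2 + 2 * htτ
    rw [this]; ring
  have e3 : gaussPDF (tP q p) = c * Real.exp (-q * L) := by
    unfold gaussPDF
    rw [← hc]
    congr 1
    rw [ht2]; ring
  have hE1 : Real.exp (-β * L) < 1 := by
    rw [Real.exp_lt_one_iff]; nlinarith
  have hden : 1 - Real.exp (-β * L) ≠ 0 := by nlinarith
  show (1 + (p : ℝ) ^ (-(4 * s))) / (1 - (p : ℝ) ^ (-β))
      = 2 * (p : ℝ) ^ (-(-β - r + 2 * s)) *
        (tprD (epsP β p) (tauP r p) (tP q p) / fprD (epsP β p) (tP q p))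
  unfold tprD fprD epsP
  rw [e1, e2, e3]
  simp only [hrpow]
  have k1 : Real.exp (-(-β - r + 2 * s) * L) * (Real.exp (-β * L) * Real.exp ((-q + 2 * s - r) * L))
      = Real.exp (-q * L) := by
    rw [← Real.exp_add, ← Real.exp_add]; congr 1; ring
  have k2 : Real.exp (-(-β - r + 2 * s) * L) * (Real.exp (-β * L) * Real.exp ((-q - 2 * s - r) * L))
      = Real.exp (-(4 * s) * L) * Real.exp (-q * L) := by
    rw [← Real.exp_add, ← Real.exp_add, ← Real.exp_add]; congr 1; ring
  have hDen : 2 * (1 - Real.exp (-β * L)) * (c * Real.exp (-q * L)) ≠ 0 :=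
    mul_ne_zero (mul_ne_zero two_ne_zero hden) (mul_ne_zero hc0 (Real.exp_ne_zero _))
  rw [← mul_div_assoc, div_eq_div_iff hden hDen]
  linear_combination (-(2 * (1 - Real.exp (-β * L)) * c)) * k1
    + (-(2 * (1 - Real.exp (-β * L)) * c)) * k2
end
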